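/- Let Q_{d,1} = conv(A) and Q_{d,2} = conv(B) be full-dimensional integral d-simplices in R^d with vertex matrices A, B ∈ Z^{d×(d+1)}. For n > d, let Q^n_{d,1} = conv(C) and Q^n_{d,2} = conv(D) be the n-dimensional pyramids obtained by adjoining the standard basis vectors e_{d+1}, ..., e_n, so C = [[A, 0],[0, I_{n-d}]] and D = [[B, 0],[0, I_{n-d}]] (viewed in Z^{n×(n+1)}). Then Q_{d,1} and Q_{d,2} are unimodularly equivalent in R^d if and only if Q^n_{d,1} and Q^n_{d,2} are unimodularly equivalent in R^n. -/

import Mathlib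

set_option linter.unusedSectionVars false
set_option maxHeartbeats 1000000


/-- Cast an integer point to a real point. -/
def toPt {ι : Type*} (v : ι → ℤ) : ι → ℝ := fun i => (v i : ℝ)

/-- Unimodular equivalence of subsets of `ℝ^ι`: one maps onto the other under an affine
map `x ↦ V x + b` with `V ∈ GL(ℤ)` and `b` integral. -/
def USimEquiv {ι : Type*} [Fintype ι] [DecidableEq ι] (P Q : Set (ι → ℝ)) : Prop :=
  ∃ (V : Matrix ι ι ℤ) (b : ι → ℤ), IsUnit V.det ∧
    (fun x : ι → ℝ => (V.map (Int.cast : ℤ → ℝ)).mulVec x + toPt b) '' P = Q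


namespace S9

variable {ι κ : Type*} [Fintype ι] [DecidableEq ι]

lemma toPt_mulVec (V : Matrix ι ι ℤ) (v : ι → ℤ) :
    (V.map (Int.cast : ℤ → ℝ)).mulVec (toPt v) = toPt (V.mulVec v) := by
  funext i
  simp [Matrix.mulVec, dotProduct, toPt, Matrix.map_apply]

lemma toPt_aff (V : Matrix ι ι ℤ) (b v : ι → ℤ) :
    (V.map (Int.cast : ℤ → ℝ)).mulVec (toPt v) + toPt b = toPt (V.mulVec v + b) := by
  rw [toPt_mulVec]; funext i; simp [toPt]

lemma toPt_injective : Function.Injective (toPt (ι := ι)) := by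
  intro u v h
  funext i
  have := congrFun h i
  simp only [toPt, Int.cast_inj] at this
  exact this

lemma toPt_sub (u v : ι → ℤ) : toPt u - toPt v = toPt (u - v) := by
  funext i; simp [toPt]

/-- Fintype criterion for affine independence in a vector space. -/
lemma ai_iff [Fintype κ] (p : κ → ι → ℝ) :
    AffineIndependent ℝ p ↔
      ∀ w : κ → ℝ, ∑ i, w i = 0 → ∑ i, w i • p i = 0 → ∀ i, w i = 0 := by
  classical
  constructor
  · intro hp w h0 h1 i
    exact hp.eq_zero_of_sum_eq_zero h0 h1 i (Finset.mem_univ i)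
  · intro H
    rw [affineIndependent_iff]
    intro s w h0 h1 e he
    have h0' : ∑ i, (if i ∈ s then w i else 0) = 0 := by
      rw [Finset.sum_ite_mem, Finset.univ_inter, h0]
    have h1' : ∑ i, (if i ∈ s then w i else 0) • p i = 0 := by
      have : ∀ i, (if i ∈ s then w i else 0) • p i = if i ∈ s then w i • p i else 0 := by
        intro i; split <;> simp
      simp_rw [this]
      rw [Finset.sum_ite_mem, Finset.univ_inter, h1]
    have := H _ h0' h1' e
    simpa [he] using this

lemma mem_hull_iff [Fintype κ] (p : κ → ι → ℝ) (x : ι → ℝ) :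
    x ∈ convexHull ℝ (Set.range p) ↔
      ∃ w : κ → ℝ, (∀ i, 0 ≤ w i) ∧ ∑ i, w i = 1 ∧ ∑ i, w i • p i = x := by
  classical
  rw [convexHull_range_eq_exists_affineCombination]
  constructor
  · rintro ⟨s, w, h0, h1, rfl⟩
    refine ⟨fun i => if i ∈ s then w i else 0, ?_, ?_, ?_⟩
    · intro i; dsimp only; split
      · exact h0 i ‹_›
      · exact le_rfl
    · dsimp only; rw [Finset.sum_ite_mem, Finset.univ_inter, h1]
    · dsimp only
      rw [Finset.affineCombination_eq_linear_combination s p w h1]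
      have h2 : ∀ i, (if i ∈ s then w i else 0) • p i = if i ∈ s then w i • p i else 0 := by
        intro i; split <;> simp
      simp_rw [h2]
      rw [Finset.sum_ite_mem, Finset.univ_inter]
  · rintro ⟨w, h0, h1, rfl⟩
    exact ⟨Finset.univ, w, fun i _ => h0 i, h1,
      by rw [Finset.affineCombination_eq_linear_combination _ p w h1]⟩

lemma extremePoints_hull [Fintype κ] {p : κ → ι → ℝ} (hp : AffineIndependent ℝ p) :
    Set.extremePoints ℝ (convexHull ℝ (Set.range p)) = Set.range p := by
  classical
  refine Set.Subset.antisymm extremePoints_convexHull_subset ?_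
  rintro - ⟨j, rfl⟩
  refine ⟨subset_convexHull ℝ _ (Set.mem_range_self j), ?_⟩
  intro y hy z hz hseg
  obtain ⟨a, b, ha, hb, hab, hsum⟩ := hseg
  rw [mem_hull_iff] at hy hz
  obtain ⟨w, hw0, hw1, rfl⟩ := hy
  obtain ⟨v, hv0, hv1, rfl⟩ := hz
  have key : ∀ i ∈ Finset.univ, a * w i + b * v i = (if i = j then (1:ℝ) else 0) := by
    refine hp.eq_of_sum_eq_sum ?_ ?_
    · have : ∑ i, (if i = j then (1:ℝ) else 0) = 1 := by simp
      rw [this, Finset.sum_add_distrib, ← Finset.mul_sum, ← Finset.mul_sum, hw1, hv1,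
        mul_one, mul_one, hab]
    · have h1 : ∑ i, (a * w i + b * v i) • p i
          = a • (∑ i, w i • p i) + b • (∑ i, v i • p i) := by
        rw [Finset.smul_sum, Finset.smul_sum, ← Finset.sum_add_distrib]
        congr 1; funext i; rw [add_smul]; rw [mul_smul, mul_smul]
      have h2 : ∑ i, (if i = j then (1:ℝ) else 0) • p i = p j := by
        rw [Finset.sum_eq_single j]
        · simp
        · intro i _ hne; simp [hne]
        · intro h; exact absurd (Finset.mem_univ j) h
      rw [h1, h2, hsum]
  have zero : ∀ i, i ≠ j → w i = 0 ∧ v i = 0 := by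
    intro i hne
    have := key i (Finset.mem_univ i)
    rw [if_neg hne] at this
    constructor
    · nlinarith [hw0 i, hv0 i]
    · nlinarith [hw0 i, hv0 i]
  have wj : w j = 1 := by
    have : ∑ i, w i = w j := by
      refine Finset.sum_eq_single j (fun i _ hne => (zero i hne).1) ?_
      intro h; exact absurd (Finset.mem_univ j) h
    rw [← hw1, this]
  have vj : v j = 1 := by
    have : ∑ i, v i = v j := by
      refine Finset.sum_eq_single j (fun i _ hne => (zero i hne).2) ?_
      intro h; exact absurd (Finset.mem_univ j) h
    rw [← hv1, this]
  rw [Finset.sum_eq_single j (fun i _ hne => by rw [(zero i hne).1, zero_smul])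
      (fun h => absurd (Finset.mem_univ j) h), wj, one_smul]

lemma image_openSegment_aff (f : (ι → ℝ) ≃ᵃ[ℝ] (ι → ℝ)) (x y : ι → ℝ) :
    ⇑f '' openSegment ℝ x y = openSegment ℝ (f x) (f y) := by
  have := image_openSegment ℝ f.toAffineMap x y
  simpa using this

lemma image_extremePoints_aff (f : (ι → ℝ) ≃ᵃ[ℝ] (ι → ℝ)) (s : Set (ι → ℝ)) :
    ⇑f '' Set.extremePoints ℝ s = Set.extremePoints ℝ (⇑f '' s) := by
  have key : ∀ x, x ∈ Set.extremePoints ℝ s → f x ∈ Set.extremePoints ℝ (⇑f '' s) := by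
    rintro x ⟨hx, hmin⟩
    refine ⟨Set.mem_image_of_mem _ hx, ?_⟩
    rintro y' ⟨y, hy, rfl⟩ z' ⟨z, hz, rfl⟩ hseg
    rw [← image_openSegment_aff] at hseg
    obtain ⟨u, hu, hufx⟩ := hseg
    have hux : u = x := f.injective hufx
    subst hux
    have h1 := hmin hy hz hu
    exact congrArg f h1
  refine Set.Subset.antisymm ?_ ?_
  · rintro - ⟨x, hx, rfl⟩; exact key x hx
  · intro b hb
    obtain ⟨a, rfl⟩ := f.surjective b
    refine ⟨a, ?_, rfl⟩
    obtain ⟨ha, hmin⟩ := hb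
    refine ⟨f.injective.mem_set_image.mp ha, ?_⟩
    intro y hy z hz hseg
    have := hmin (Set.mem_image_of_mem _ hy) (Set.mem_image_of_mem _ hz)
      (by rw [← image_openSegment_aff]; exact Set.mem_image_of_mem _ hseg)
    exact f.injective this

/-- The affine map `x ↦ R x + t` as an `AffineMap`. -/
noncomputable def affMap (R : Matrix ι ι ℝ) (t : ι → ℝ) : (ι → ℝ) →ᵃ[ℝ] (ι → ℝ) where
  toFun x := R.mulVec x + t
  linear := R.mulVecLin
  map_vadd' p v := by
    simp only [vadd_eq_add, Matrix.mulVec_add, Matrix.mulVecLin_apply]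
    abel

lemma affMap_apply (R : Matrix ι ι ℝ) (t : ι → ℝ) (x : ι → ℝ) :
    affMap R t x = R.mulVec x + t := rfl

/-- Build a `USimEquiv` from a vertexwise integral correspondence. -/
lemma build {κ : Type*} [Fintype κ] (P Q : Matrix ι κ ℤ) (V : Matrix ι ι ℤ) (b : ι → ℤ)
    (hdet : IsUnit V.det) (τ : κ → κ) (hτ : Function.Surjective τ)
    (h : ∀ j, V.mulVec (fun i => P i j) + b = fun i => Q i (τ j)) :
    USimEquiv (convexHull ℝ (Set.range fun j => toPt (fun i => P i j)))
      (convexHull ℝ (Set.range fun j => toPt (fun i => Q i j))) := by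
  refine ⟨V, b, hdet, ?_⟩
  have hfc : (fun x : ι → ℝ => (V.map (Int.cast : ℤ → ℝ)).mulVec x + toPt b)
      = ⇑(affMap (V.map (Int.cast : ℤ → ℝ)) (toPt b)) := rfl
  rw [hfc, AffineMap.image_convexHull]
  congr 1
  rw [← Set.range_comp]
  have hcomp : (⇑(affMap (V.map (Int.cast : ℤ → ℝ)) (toPt b)) ∘ fun j => toPt (fun i => P i j))
      = (fun j => toPt (fun i => Q i j)) ∘ τ := by
    funext j
    simp only [Function.comp_apply, affMap_apply]
    rw [toPt_aff, h j]
  rw [hcomp, Set.range_comp, hτ.range_eq, Set.image_univ]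

/-- Extract a vertexwise integral correspondence from a `USimEquiv` of two
integral simplices. -/
lemma extract {κ : Type*} [Fintype κ] (P Q : Matrix ι κ ℤ)
    (hP : AffineIndependent ℝ (fun j => toPt (fun i => P i j)))
    (hQ : AffineIndependent ℝ (fun j => toPt (fun i => Q i j)))
    (hU : USimEquiv (convexHull ℝ (Set.range fun j => toPt (fun i => P i j)))
      (convexHull ℝ (Set.range fun j => toPt (fun i => Q i j)))) :
    ∃ (V : Matrix ι ι ℤ) (b : ι → ℤ) (π : κ → κ), IsUnit V.det ∧ Function.Bijective π ∧
      ∀ j, V.mulVec (fun i => P i j) + b = fun i => Q i (π j) := by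
  classical
  obtain ⟨V, b, hdet, him⟩ := hU
  set R := V.map (Int.cast : ℤ → ℝ) with hR
  have hRdet : IsUnit R.det := by
    have : R.det = ((V.det : ℤ) : ℝ) := by
      have h := RingHom.map_det (Int.castRingHom ℝ) V
      rw [hR]
      simpa [RingHom.mapMatrix_apply] using h.symm
    rw [this]
    rcases Int.isUnit_iff.mp hdet with h | h <;> simp [h]
  have hinv : Invertible R := R.invertibleOfIsUnitDet hRdet
  let F : (ι → ℝ) ≃ᵃ[ℝ] (ι → ℝ) :=
    (R.toLinearEquiv' hinv).toAffineEquiv.trans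
      (AffineEquiv.constVAdd ℝ (ι → ℝ) (toPt b))
  have hFc : ⇑F = fun x : ι → ℝ => R.mulVec x + toPt b := by
    funext x
    show toPt b +ᵥ ((R.toLinearEquiv' hinv) x) = R.mulVec x + toPt b
    have : (R.toLinearEquiv' hinv) x = R.mulVec x := by
      have := Matrix.toLinearEquiv'_apply R hinv
      calc (R.toLinearEquiv' hinv) x = ((R.toLinearEquiv' hinv : Module.End ℝ (ι → ℝ))) x := rfl
        _ = Matrix.toLin' R x := by rw [this]
        _ = R.mulVec x := Matrix.toLin'_apply R x
    rw [this, vadd_eq_add, add_comm]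
  have him' : ⇑F '' convexHull ℝ (Set.range fun j => toPt (fun i => P i j))
      = convexHull ℝ (Set.range fun j => toPt (fun i => Q i j)) := by
    rw [hFc]; exact him
  have hvert : ⇑F '' (Set.range fun j => toPt (fun i => P i j))
      = Set.range fun j => toPt (fun i => Q i j) := by
    calc ⇑F '' (Set.range fun j => toPt (fun i => P i j))
        = ⇑F '' Set.extremePoints ℝ (convexHull ℝ (Set.range fun j => toPt (fun i => P i j))) := by
          rw [extremePoints_hull hP]
      _ = Set.extremePoints ℝ (⇑F '' convexHull ℝ (Set.range fun j => toPt (fun i => P i j))) :=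
          image_extremePoints_aff F _
      _ = Set.extremePoints ℝ (convexHull ℝ (Set.range fun j => toPt (fun i => Q i j))) := by
          rw [him']
      _ = Set.range fun j => toPt (fun i => Q i j) := extremePoints_hull hQ
  have hchoice : ∀ j : κ, ∃ i : κ, toPt (fun r => Q r i) = F (toPt (fun r => P r j)) := by
    intro j
    have : F (toPt (fun r => P r j)) ∈ Set.range fun j => toPt (fun i => Q i j) := by
      rw [← hvert]
      exact Set.mem_image_of_mem _ (Set.mem_range_self j)
    obtain ⟨i, hi⟩ := this
    exact ⟨i, hi⟩
  choose π hπ using hchoice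
  have heq : ∀ j, V.mulVec (fun i => P i j) + b = fun i => Q i (π j) := by
    intro j
    apply toPt_injective
    rw [← toPt_aff, hπ j, hFc]
  have hinj : Function.Injective π := by
    intro j j' hjj
    have h1 : F (toPt (fun r => P r j)) = F (toPt (fun r => P r j')) := by
      rw [← hπ j, ← hπ j', hjj]
    have h2 : toPt (fun r => P r j) = toPt (fun r => P r j') := F.injective h1
    exact hP.injective h2
  exact ⟨V, b, π, hdet, ⟨hinj, Finite.surjective_of_injective hinj⟩, heq⟩

/-- Affine independence of the vertex family of the pyramid. -/
lemma pyrAI {d m : ℕ} (A : Matrix (Fin d) (Fin (d + 1)) ℤ)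
    (hA : AffineIndependent ℝ (fun j : Fin (d + 1) => toPt (fun i => A i j))) :
    AffineIndependent ℝ (fun j : Fin (d + 1) ⊕ Fin m =>
      toPt (fun i => Matrix.fromBlocks A 0 0 (1 : Matrix (Fin m) (Fin m) ℤ) i j)) := by
  classical
  rw [ai_iff]
  intro w h0 h1
  have hr : ∀ k : Fin m, w (Sum.inr k) = 0 := by
    intro k
    have h := congrFun h1 (Sum.inr k)
    rw [Finset.sum_apply] at h
    simp only [Pi.smul_apply, smul_eq_mul, Pi.zero_apply] at h
    rw [Fintype.sum_sum_type] at h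
    simp only [toPt, Matrix.fromBlocks_apply₂₁, Matrix.fromBlocks_apply₂₂, Matrix.zero_apply,
      Matrix.one_apply, Int.cast_zero, mul_zero, Finset.sum_const_zero, zero_add] at h
    rw [Finset.sum_congr rfl (g := fun k' => if k' = k then w (Sum.inr k') else 0)
      (fun k' _ => by split <;> simp_all)] at h
    simpa using h
  have hl : ∀ j : Fin (d + 1), w (Sum.inl j) = 0 := by
    have h0' : ∑ j : Fin (d + 1), w (Sum.inl j) = 0 := by
      rw [Fintype.sum_sum_type] at h0
      simpa [hr] using h0
    have h1' : ∑ j : Fin (d + 1), w (Sum.inl j) • (toPt (fun i => A i j)) = 0 := by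
      funext i
      have h := congrFun h1 (Sum.inl i)
      rw [Finset.sum_apply] at h
      simp only [Pi.smul_apply, smul_eq_mul, Pi.zero_apply] at h
      rw [Fintype.sum_sum_type] at h
      simp only [toPt, Matrix.fromBlocks_apply₁₁, Matrix.fromBlocks_apply₁₂, Matrix.zero_apply,
        Int.cast_zero, mul_zero, Finset.sum_const_zero, add_zero] at h
      rw [Finset.sum_apply]
      simpa [toPt] using h
    exact fun j => (ai_iff _).mp hA _ h0' h1' j
  intro x
  cases x with
  | inl j => exact hl j
  | inr k => exact hr k

/-- In a bijection of a sum type, as many left points go right as right points go left. -/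
lemma card_mixed {α β : Type*} [Fintype α] [Fintype β] {π : α ⊕ β → α ⊕ β}
    (hπ : Function.Bijective π) :
    Fintype.card {a : α // (π (Sum.inl a)).isRight} =
      Fintype.card {b : β // (π (Sum.inr b)).isLeft} := by
  classical
  have c1 : Fintype.card {x : α ⊕ β // (π x).isLeft} =
      Fintype.card {y : α ⊕ β // y.isLeft} :=
    Fintype.card_congr (Equiv.subtypeEquiv (Equiv.ofBijective π hπ) (fun x => Iff.rfl))
  have c2 : Fintype.card {x : α ⊕ β // (π x).isLeft}
      = Fintype.card {a : α // (π (Sum.inl a)).isLeft}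
        + Fintype.card {b : β // (π (Sum.inr b)).isLeft} := by
    rw [Fintype.card_congr (Equiv.subtypeSum (p := fun x : α ⊕ β => ((π x).isLeft : Prop))),
      Fintype.card_sum]
  have c3 : Fintype.card {y : α ⊕ β // y.isLeft} = Fintype.card α := by
    rw [Fintype.card_congr (Equiv.subtypeSum (p := fun x : α ⊕ β => (x.isLeft : Prop))),
      Fintype.card_sum]
    have e1 : Fintype.card {a : α // ((Sum.inl a : α ⊕ β).isLeft : Prop)} = Fintype.card α :=
      Fintype.card_congr (Equiv.subtypeUnivEquiv (fun a => by simp))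
    have e2 : Fintype.card {b : β // ((Sum.inr b : α ⊕ β).isLeft : Prop)} = 0 := by
      simp
    rw [e1, e2]
    exact Nat.add_zero _
  have c4 : Fintype.card {a : α // (π (Sum.inl a)).isLeft}
      + Fintype.card {a : α // (π (Sum.inl a)).isRight} = Fintype.card α := by
    have e3 : Fintype.card {a : α // (π (Sum.inl a)).isRight}
        = Fintype.card {a : α // ¬ (π (Sum.inl a)).isLeft} :=
      Fintype.card_congr (Equiv.subtypeEquivRight (fun a => by
        simp [Sum.not_isLeft]))
    rw [e3, ← Fintype.card_sum]
    exact Fintype.card_congr (Equiv.sumCompl (fun a => ((π (Sum.inl a)).isLeft : Prop)))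
  omega

lemma colL {d m : ℕ} (X : Matrix (Fin d) (Fin (d + 1)) ℤ) (j : Fin (d + 1)) :
    (fun i => Matrix.fromBlocks X 0 0 (1 : Matrix (Fin m) (Fin m) ℤ) i (Sum.inl j))
      = Sum.elim (fun i => X i j) 0 := by
  funext r; cases r <;> simp

lemma colR {d m : ℕ} (X : Matrix (Fin d) (Fin (d + 1)) ℤ) (k : Fin m) :
    (fun i => Matrix.fromBlocks X 0 0 (1 : Matrix (Fin m) (Fin m) ℤ) i (Sum.inr k))
      = Sum.elim (0 : Fin d → ℤ) (Pi.single k 1) := by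
  funext r; cases r <;> simp [Matrix.one_apply, Pi.single_apply]

/-- From a pyramid-level vertex correspondence, produce a base-level one. -/
lemma pyrStep {d m : ℕ} (A B : Matrix (Fin d) (Fin (d + 1)) ℤ)
    (W : Matrix (Fin d ⊕ Fin m) (Fin d ⊕ Fin m) ℤ) (c : Fin d ⊕ Fin m → ℤ)
    (π : Fin (d + 1) ⊕ Fin m → Fin (d + 1) ⊕ Fin m) (hπ : Function.Bijective π)
    (heq : ∀ x, W.mulVec (fun i => Matrix.fromBlocks A 0 0 (1 : Matrix (Fin m) (Fin m) ℤ) i x) + c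
      = fun i => Matrix.fromBlocks B 0 0 (1 : Matrix (Fin m) (Fin m) ℤ) i (π x)) :
    ∃ (V : Matrix (Fin d) (Fin d) ℤ) (b : Fin d → ℤ) (τ : Fin (d + 1) → Fin (d + 1)),
      Function.Bijective τ ∧ ∀ j, V.mulVec (fun i => A i j) + b = fun i => B i (τ j) := by
  classical
  set M := W.toBlocks₁₁ with hM
  set F := W.toBlocks₁₂ with hF
  set G := W.toBlocks₂₁ with hG
  set H := W.toBlocks₂₂ with hH
  set c₁ : Fin d → ℤ := fun i => c (Sum.inl i) with hc₁
  set c₂ : Fin m → ℤ := fun i => c (Sum.inr i) with hc₂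
  -- column descriptions
  have hColl : ∀ (X : Matrix (Fin d) (Fin (d + 1)) ℤ) (j : Fin (d + 1)),
      (fun i => Matrix.fromBlocks X 0 0 (1 : Matrix (Fin m) (Fin m) ℤ) i (Sum.inl j))
        = Sum.elim (fun i => X i j) 0 := by
    intro X j; funext r; cases r <;> simp
  have hColr : ∀ (X : Matrix (Fin d) (Fin (d + 1)) ℤ) (k : Fin m),
      (fun i => Matrix.fromBlocks X 0 0 (1 : Matrix (Fin m) (Fin m) ℤ) i (Sum.inr k))
        = Sum.elim (0 : Fin d → ℤ) (Pi.single k 1) := by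
    intro X k; funext r; cases r <;> simp [Matrix.one_apply, Pi.single_apply]
  -- block decomposition of the map
  have hWview : ∀ (u : Fin d → ℤ) (v : Fin m → ℤ),
      W.mulVec (Sum.elim u v) + c
        = Sum.elim (M.mulVec u + F.mulVec v + c₁) (G.mulVec u + H.mulVec v + c₂) := by
    intro u v
    have hW : W = Matrix.fromBlocks M F G H := by
      rw [hM, hF, hG, hH, Matrix.fromBlocks_toBlocks]
    rw [hW, Matrix.fromBlocks_mulVec]
    funext r; cases r <;> simp [hc₁, hc₂]
  -- case equations
  have E11 : ∀ j i, π (Sum.inl j) = Sum.inl i →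
      M.mulVec (fun r => A r j) + c₁ = (fun r => B r i)
        ∧ G.mulVec (fun r => A r j) + c₂ = 0 := by
    intro j i hji
    have key := heq (Sum.inl j)
    simp only [hji] at key
    rw [hColl A j, hColl B i, hWview] at key
    constructor
    · funext r
      have h := congrFun key (Sum.inl r)
      simpa using h
    · funext r
      have h := congrFun key (Sum.inr r)
      simpa using h
  have E12 : ∀ j l, π (Sum.inl j) = Sum.inr l →
      M.mulVec (fun r => A r j) + c₁ = 0
        ∧ G.mulVec (fun r => A r j) + c₂ = Pi.single l 1 := by
    intro j l hjl
    have key := heq (Sum.inl j)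
    simp only [hjl] at key
    rw [hColl A j, hColr B l, hWview] at key
    constructor
    · funext r
      have h := congrFun key (Sum.inl r)
      simpa using h
    · funext r
      have h := congrFun key (Sum.inr r)
      simpa using h
  have E21 : ∀ k i, π (Sum.inr k) = Sum.inl i →
      F.mulVec (Pi.single k 1) + c₁ = (fun r => B r i) := by
    intro k i hki
    have key := heq (Sum.inr k)
    simp only [hki] at key
    rw [hColr A k, hColl B i, hWview] at key
    funext r
    have h := congrFun key (Sum.inl r)
    simpa using h
  -- the pairing between base columns going to apexes and apexes going to base columns
  let e : {j : Fin (d + 1) // (π (Sum.inl j)).isRight} ≃ {k : Fin m // (π (Sum.inr k)).isLeft} :=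
    Fintype.equivOfCardEq (card_mixed hπ)
  have hKex : ∀ k : {k : Fin m // (π (Sum.inr k)).isLeft}, ∃ i, π (Sum.inr k.1) = Sum.inl i := by
    rintro ⟨k, hk⟩
    cases h : π (Sum.inr k) with
    | inl i => exact ⟨i, rfl⟩
    | inr l => rw [h] at hk; simp at hk
  choose tgt htgt using hKex
  have hJex : ∀ j : Fin (d + 1), ∃ i,
      ¬ (π (Sum.inl j)).isRight → π (Sum.inl j) = Sum.inl i := by
    intro j
    cases h : π (Sum.inl j) with
    | inl i => exact ⟨i, fun _ => rfl⟩
    | inr l => exact ⟨0, fun hn => absurd rfl hn⟩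
  choose fb hfb using hJex
  let τ : Fin (d + 1) → Fin (d + 1) := fun j =>
    if h : (π (Sum.inl j)).isRight then tgt (e ⟨j, h⟩) else fb j
  have hτ1 : ∀ j, ¬ (π (Sum.inl j)).isRight → π (Sum.inl j) = Sum.inl (τ j) := by
    intro j h
    simp only [τ, dif_neg h]
    exact hfb j h
  have hτ2 : ∀ j (h : (π (Sum.inl j)).isRight), π (Sum.inr (e ⟨j, h⟩).1) = Sum.inl (τ j) := by
    intro j h
    simp only [τ, dif_pos h]
    exact htgt (e ⟨j, h⟩)
  -- the correction matrix
  let KM : Matrix (Fin d) (Fin m) ℤ := Matrix.of fun i l =>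
    if h : ∃ j, π (Sum.inl j) = Sum.inr l then B i (τ h.choose) else 0
  refine ⟨M + KM * G, c₁ + KM.mulVec c₂, τ, ?_, ?_⟩
  · -- bijectivity of τ
    have hinj : Function.Injective τ := by
      intro j j' hjj
      by_cases h : (π (Sum.inl j)).isRight <;> by_cases h' : (π (Sum.inl j')).isRight
      · have k1 := hτ2 j h
        have k2 := hτ2 j' h'
        rw [hjj] at k1
        have := hπ.injective (k1.trans k2.symm)
        have : (e ⟨j, h⟩) = (e ⟨j', h'⟩) := Subtype.ext (Sum.inr.inj this)
        have := e.injective this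
        exact congrArg Subtype.val this
      · have k1 := hτ2 j h
        have k2 := hτ1 j' h'
        rw [hjj] at k1
        have := hπ.injective (k1.trans k2.symm)
        exact absurd this (by simp)
      · have k1 := hτ1 j h
        have k2 := hτ2 j' h'
        rw [hjj] at k1
        have := hπ.injective (k2.trans k1.symm)
        exact absurd this (by simp)
      · have k1 := hτ1 j h
        have k2 := hτ1 j' h'
        rw [hjj] at k1
        have := hπ.injective (k1.trans k2.symm)
        exact Sum.inl.inj this
    exact ⟨hinj, Finite.surjective_of_injective hinj⟩
  · -- the equations
    intro j
    have expand : (M + KM * G).mulVec (fun r => A r j) + (c₁ + KM.mulVec c₂)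
        = (M.mulVec (fun r => A r j) + c₁)
          + KM.mulVec (G.mulVec (fun r => A r j) + c₂) := by
      rw [Matrix.add_mulVec, Matrix.mulVec_add, ← Matrix.mulVec_mulVec]
      abel
    rw [expand]
    by_cases h : (π (Sum.inl j)).isRight
    · -- base vertex sent to an apex
      obtain ⟨l, hl⟩ : ∃ l, π (Sum.inl j) = Sum.inr l := by
        cases hx : π (Sum.inl j) with
        | inl i => rw [hx] at h; simp at h
        | inr l => exact ⟨l, rfl⟩
      obtain ⟨e1, e2⟩ := E12 j l hl
      rw [e1, e2, zero_add]
      have hex : ∃ j', π (Sum.inl j') = Sum.inr l := ⟨j, hl⟩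
      have hch : hex.choose = j := by
        have := hex.choose_spec
        have h2 := hπ.injective (this.trans hl.symm)
        exact Sum.inl.inj h2
      funext r
      rw [Matrix.mulVec_single_one]
      simp only [KM, Matrix.col_apply, Matrix.of_apply, dif_pos hex, hch, mul_one]
    · -- base vertex sent to a base vertex
      obtain ⟨e1, e2⟩ := E11 j (τ j) (hτ1 j h)
      rw [e1, e2, Matrix.mulVec_zero, add_zero]

/-- If there are integral affine correspondences in both directions between the columns of `A`
and `B`, and the columns of `A` are affinely independent, the matrix is unimodular. -/
lemma unit_det {d : ℕ} (A B : Matrix (Fin d) (Fin (d + 1)) ℤ)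
    (hA : AffineIndependent ℝ (fun j : Fin (d + 1) => toPt (fun i => A i j)))
    (V₁ V₂ : Matrix (Fin d) (Fin d) ℤ) (b₁ b₂ : Fin d → ℤ)
    (τ₁ τ₂ : Fin (d + 1) → Fin (d + 1)) (hτ₁ : Function.Bijective τ₁)
    (hτ₂ : Function.Bijective τ₂)
    (h₁ : ∀ j, V₁.mulVec (fun i => A i j) + b₁ = fun i => B i (τ₁ j))
    (h₂ : ∀ j, V₂.mulVec (fun i => B i j) + b₂ = fun i => A i (τ₂ j)) :
    IsUnit V₁.det := by
  classical
  rcases Nat.eq_zero_or_pos d with hd | hd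
  · subst hd
    haveI : IsEmpty (Fin 0) := inferInstance
    rw [Matrix.det_isEmpty]
    exact isUnit_one
  set N := V₂ * V₁ with hNdef
  set eshift := V₂.mulVec b₁ + b₂ with hesh
  set ρ : Fin (d + 1) → Fin (d + 1) := τ₂ ∘ τ₁ with hρ
  have hρbij : Function.Bijective ρ := hτ₂.comp hτ₁
  set ρe := Equiv.ofBijective ρ hρbij with hρe
  have hN : ∀ j, N.mulVec (fun i => A i j) + eshift = fun i => A i (ρ j) := by
    intro j
    calc N.mulVec (fun i => A i j) + eshift
        = V₂.mulVec (V₁.mulVec (fun i => A i j) + b₁) + b₂ := by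
          rw [Matrix.mulVec_add, ← Matrix.mulVec_mulVec, hesh]; abel
      _ = V₂.mulVec (fun i => B i (τ₁ j)) + b₂ := by rw [h₁ j]
      _ = fun i => A i (τ₂ (τ₁ j)) := h₂ (τ₁ j)
  have hdiff : ∀ j, N.mulVec ((fun i => A i j) - (fun i => A i 0))
      = (fun i => A i (ρ j)) - (fun i => A i (ρ 0)) := by
    intro j
    rw [Matrix.mulVec_sub]
    have := congrArg₂ (· - ·) (hN j) (hN 0)
    simpa using this
  have key : ∀ (k : ℕ) (j), (N ^ k).mulVec ((fun i => A i j) - (fun i => A i 0))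
      = (fun i => A i ((ρe ^ k) j)) - (fun i => A i ((ρe ^ k) 0)) := by
    intro k
    induction k with
    | zero => intro j; simp [Matrix.one_mulVec]
    | succ k ih =>
      intro j
      have hsplit : (N ^ (k + 1)).mulVec ((fun i => A i j) - (fun i => A i 0))
          = (N ^ k).mulVec (N.mulVec ((fun i => A i j) - (fun i => A i 0))) := by
        rw [Matrix.mulVec_mulVec, ← pow_succ]
      rw [hsplit, hdiff]
      have hrw : (fun i => A i (ρ j)) - (fun i => A i (ρ 0))
          = ((fun i => A i (ρ j)) - (fun i => A i 0))
            - ((fun i => A i (ρ 0)) - (fun i => A i 0)) := by abel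
      rw [hrw, Matrix.mulVec_sub, ih (ρ j), ih (ρ 0)]
      have hp1 : (ρe ^ (k + 1)) j = (ρe ^ k) (ρ j) := by
        rw [pow_succ, Equiv.Perm.mul_apply]; rfl
      have hp0 : (ρe ^ (k + 1)) 0 = (ρe ^ k) (ρ 0) := by
        rw [pow_succ, Equiv.Perm.mul_apply]; rfl
      rw [hp1, hp0]
      abel
  set s := orderOf ρe with hs
  have hspos : s ≠ 0 := (orderOf_pos ρe).ne'
  have hfix : ∀ j, (N ^ s).mulVec ((fun i => A i j) - (fun i => A i 0))
      = (fun i => A i j) - (fun i => A i 0) := by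
    intro j
    rw [key s j, pow_orderOf_eq_one ρe]
    simp
  -- move to ℝ
  set Rt := (N ^ s).map (Int.cast : ℤ → ℝ) with hRt
  have hfixR : ∀ j, Rt.mulVec (toPt (fun i => A i j) - toPt (fun i => A i 0))
      = toPt (fun i => A i j) - toPt (fun i => A i 0) := by
    intro j
    rw [toPt_sub, hRt, toPt_mulVec, hfix j]
  have li : LinearIndependent ℝ (fun x : {x : Fin (d + 1) // x ≠ 0} =>
      toPt (fun i => A i x.1) - toPt (fun i => A i 0)) := by
    have := (affineIndependent_iff_linearIndependent_vsub ℝ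
      (fun j : Fin (d + 1) => toPt (fun i => A i j)) 0).mp hA
    simpa [vsub_eq_sub] using this
  have hcard : Fintype.card {x : Fin (d + 1) // x ≠ 0} = d := by
    simp [Fintype.card_subtype_compl]
  have hfinrank : Module.finrank ℝ (Fin d → ℝ) = d := Module.finrank_fin_fun ℝ
  haveI : Nonempty {x : Fin (d + 1) // x ≠ 0} := by
    refine ⟨⟨⟨1, by omega⟩, ?_⟩⟩
    intro hcon
    have := congrArg Fin.val hcon
    simp at this
  let bas := basisOfLinearIndependentOfCardEqFinrank li (by rw [hcard, hfinrank])
  have hbas : ⇑bas = (fun x : {x : Fin (d + 1) // x ≠ 0} =>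
      toPt (fun i => A i x.1) - toPt (fun i => A i 0)) :=
    coe_basisOfLinearIndependentOfCardEqFinrank li _
  have hlin : Rt.mulVecLin = LinearMap.id := by
    apply bas.ext
    intro x
    rw [hbas]
    simpa [Matrix.mulVecLin_apply] using hfixR x.1
  have hRtid : ∀ v, Rt.mulVec v = v := by
    intro v
    have := LinearMap.congr_fun hlin v
    simpa [Matrix.mulVecLin_apply] using this
  have hN1 : N ^ s = 1 := by
    ext i j
    have h := congrFun (hRtid (Pi.single j 1)) i
    rw [Matrix.mulVec_single_one] at h
    simp only [Matrix.col_apply] at h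
    have hL : Rt i j = ((N ^ s) i j : ℝ) := by simp [hRt]
    have hR : (Pi.single j (1 : ℝ) : Fin d → ℝ) i = (((1 : Matrix (Fin d) (Fin d) ℤ) i j : ℤ) : ℝ) := by
      by_cases hij : i = j
      · subst hij; simp
      · simp [Pi.single_apply, Matrix.one_apply, hij, Ne.symm hij]
    rw [hL, hR] at h
    exact_mod_cast h
  have hdet1 : V₂.det * V₁.det = N.det := (Matrix.det_mul V₂ V₁).symm
  have : IsUnit N.det := by
    apply IsUnit.of_pow_eq_one (n := s) _ hspos
    rw [← Matrix.det_pow, hN1, Matrix.det_one]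
  rw [← hdet1] at this
  exact isUnit_of_mul_isUnit_right this

end S9


/-- Two full-dimensional integral `d`-simplices are unimodularly equivalent iff their
`n`-dimensional pyramids (obtained by adjoining the standard basis vectors
`e_{d+1}, …, e_n`, with `m = n - d > 0`) are unimodularly equivalent. -/
theorem stmt9 {d m : ℕ} (hm : 0 < m)
    (A B : Matrix (Fin d) (Fin (d + 1)) ℤ)
    (hA : AffineIndependent ℝ (fun j : Fin (d + 1) => toPt (fun i => A i j)))
    (hB : AffineIndependent ℝ (fun j : Fin (d + 1) => toPt (fun i => B i j))) :
    USimEquiv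
      (convexHull ℝ (Set.range fun j : Fin (d + 1) => toPt (fun i => A i j)))
      (convexHull ℝ (Set.range fun j : Fin (d + 1) => toPt (fun i => B i j))) ↔
    USimEquiv
      (convexHull ℝ (Set.range fun j : Fin (d + 1) ⊕ Fin m =>
        toPt (fun i => Matrix.fromBlocks A 0 0 (1 : Matrix (Fin m) (Fin m) ℤ) i j)))
      (convexHull ℝ (Set.range fun j : Fin (d + 1) ⊕ Fin m =>
        toPt (fun i => Matrix.fromBlocks B 0 0 (1 : Matrix (Fin m) (Fin m) ℤ) i j))) := by
  classical
  constructor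
  · -- forward: base equivalence gives pyramid equivalence
    intro h
    obtain ⟨V, b, σ, hdet, hσ, heq⟩ := S9.extract A B hA hB h
    set KF : Matrix (Fin d) (Fin m) ℤ := Matrix.of fun i _ => -(b i) with hKF
    set W : Matrix (Fin d ⊕ Fin m) (Fin d ⊕ Fin m) ℤ :=
      Matrix.fromBlocks V KF 0 1 with hW
    have hdetW : IsUnit W.det := by
      rw [hW, Matrix.det_fromBlocks_zero₂₁, Matrix.det_one, mul_one]
      exact hdet
    refine S9.build _ _ W (Sum.elim b 0) hdetW (Sum.map σ id)
      (hσ.2.sumMap Function.surjective_id) ?_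
    intro x
    cases x with
    | inl j =>
      rw [S9.colL A j]
      have hmap : (Sum.map σ id (Sum.inl j) : Fin (d + 1) ⊕ Fin m) = Sum.inl (σ j) := rfl
      rw [hmap, S9.colL B (σ j), hW, Matrix.fromBlocks_mulVec]
      funext r
      cases r with
      | inl i =>
        have := congrFun (heq j) i
        simpa [Matrix.mulVec_zero] using this
      | inr k =>
        simp [Matrix.zero_mulVec, Matrix.mulVec_zero]
    | inr k =>
      rw [S9.colR A k]
      have hmap : (Sum.map σ id (Sum.inr k) : Fin (d + 1) ⊕ Fin m) = Sum.inr k := rfl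
      rw [hmap, S9.colR B k, hW, Matrix.fromBlocks_mulVec]
      funext r
      cases r with
      | inl i =>
        simp only [Sum.elim_comp_inl, Sum.elim_comp_inr, Sum.elim_inl, Pi.add_apply,
          Matrix.mulVec_zero, Pi.zero_apply, zero_add, Matrix.mulVec_single, hKF]
        simp
      | inr k' =>
        simp only [Sum.elim_comp_inl, Sum.elim_comp_inr, Sum.elim_inr, Pi.add_apply,
          Matrix.zero_mulVec, Matrix.one_mulVec, Pi.zero_apply, zero_add, add_zero]
  · -- backward: pyramid equivalence gives base equivalence
    intro h
    obtain ⟨W, cc, π, hdetW, hπ, heq⟩ :=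
      S9.extract _ _ (S9.pyrAI (m := m) A hA) (S9.pyrAI (m := m) B hB) h
    obtain ⟨V₁, b₁, τ₁, hτ₁, heq₁⟩ := S9.pyrStep A B W cc π hπ heq
    -- inverse correspondence
    set πe := Equiv.ofBijective π hπ with hπe
    have hWiW : W⁻¹ * W = 1 := Matrix.nonsing_inv_mul W hdetW
    have heq' : ∀ y, (W⁻¹).mulVec
        (fun i => Matrix.fromBlocks B 0 0 (1 : Matrix (Fin m) (Fin m) ℤ) i y)
          + (-(W⁻¹.mulVec cc))
        = fun i => Matrix.fromBlocks A 0 0 (1 : Matrix (Fin m) (Fin m) ℤ) i (πe.symm y) := by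
      intro y
      have hx := heq (πe.symm y)
      have hy : π (πe.symm y) = y := πe.apply_symm_apply y
      rw [hy] at hx
      rw [← hx]
      rw [Matrix.mulVec_add, Matrix.mulVec_mulVec, hWiW, Matrix.one_mulVec]
      abel
    obtain ⟨V₂, b₂, τ₂, hτ₂, heq₂⟩ := S9.pyrStep B A W⁻¹ (-(W⁻¹.mulVec cc))
      πe.symm (πe.symm.bijective) heq'
    have hdet₁ : IsUnit V₁.det :=
      S9.unit_det A B hA V₁ V₂ b₁ b₂ τ₁ τ₂ hτ₁ hτ₂ heq₁ heq₂
    exact S9.build A B V₁ b₁ hdet₁ τ₁ hτ₁.2 heq₁
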